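/- For any 0 < α < 1/2, define γ̂ = α², ε̂ = α(1-2α), and let f(α,γ,ε) = 2α·ln λ + H(α) + H₁(γ,α) + H₁(α-γ, 1-α) + d·Ψ₂(α,γ,ε) where H₁(x,y) = -x(ln x - ln y) + (x-y)(ln(y-x) - ln y) and Ψ₂ is given by the explicit integral formula. Then f(α, γ̂, ε̂) = 2Φ(α), where Φ(α) = H(α) + α·ln λ + d·((1-α)ln(1-α) - ((1-2α)/2)ln(1-2α)). -/

import Mathlib

open Real

noncomputable def hardcoreH (x : ℝ) : ℝ := -x * log x - (1 - x) * log (1 - x)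

noncomputable def hardcoreH1 (x y : ℝ) : ℝ :=
  -x * (log x - log y) + (x - y) * (log (y - x) - log y)

noncomputable def hardcorePsi2 (α γ ε : ℝ) : ℝ :=
  hardcoreH1 ε (α - γ)
  + (∫ x in (0:ℝ)..γ, log (1 - 2*α + γ - x)) - (∫ x in (0:ℝ)..γ, log (1 - 2*x))
  + (∫ x in (0:ℝ)..ε, log (1 - 2*α - x))
  + (∫ x in (0:ℝ)..(α - γ - ε), log (α - γ - x))
  - (∫ x in (0:ℝ)..(α - γ), log (1 - 2*γ - 2*x))
  + (∫ x in (0:ℝ)..ε, log (1 - 2*α - ε - x))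
  - (∫ x in (0:ℝ)..ε, log (1 - 2*α - 2*x))

noncomputable def hardcoreF (lam : ℝ) (d : ℕ) (α γ ε : ℝ) : ℝ :=
  2*α * log lam + hardcoreH α + hardcoreH1 γ α + hardcoreH1 (α - γ) (1 - α)
    + d * hardcorePsi2 α γ ε

noncomputable def hardcorePhi (lam : ℝ) (d : ℕ) (α : ℝ) : ℝ :=
  hardcoreH α + α * log lam +
    d * ((1 - α) * log (1 - α) - ((1 - 2*α)/2) * log (1 - 2*α))

lemma intlog1 (c t : ℝ) (h0 : 0 ≤ t) (h : t < c) :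
    ∫ x in (0:ℝ)..t, log (c - x) = c * log c - (c - t) * log (c - t) - t := by
  rw [intervalIntegral.integral_comp_sub_left (fun x => log x) c]
  rw [sub_zero, integral_log]
  ring_nf

lemma intlog2 (c t : ℝ) (h0 : 0 ≤ t) (h : 2*t < c) :
    ∫ x in (0:ℝ)..t, log (c - 2*x) = c/2 * log c - (c - 2*t)/2 * log (c - 2*t) - t := by
  have e : ∫ x in (0:ℝ)..t, log (c - 2*x)
      = (2:ℝ)⁻¹ • ∫ x in (2*(0:ℝ))..(2*t), log (c - x) :=
    intervalIntegral.integral_comp_mul_left (fun y => log (c - y)) two_ne_zero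
  rw [e, mul_zero, intlog1 c (2*t) (by linarith) h]
  simp only [smul_eq_mul]
  ring

/-- At the product overlap γ̂ = α², ε̂ = α(1-2α), the second-moment rate function f
equals twice the first-moment rate: f(α, γ̂, ε̂) = 2Φ(α). -/
theorem hardcoreF_at_hat_eq_two_Phi (lam : ℝ) (hlam : 0 < lam) (d : ℕ) (hd : 1 ≤ d)
    (α : ℝ) (hα0 : 0 < α) (hα : α < 1/2) :
    hardcoreF lam d α (α^2) (α * (1 - 2*α)) = 2 * hardcorePhi lam d α := by
  have hαne : α ≠ 0 := ne_of_gt hα0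
  have h1ne : (1:ℝ) - α ≠ 0 := by intro h; nlinarith
  have hsne : (1:ℝ) - 2*α ≠ 0 := by intro h; nlinarith
  simp only [hardcoreF, hardcorePhi, hardcoreH, hardcoreH1, hardcorePsi2]
  rw [intlog1 (1 - 2*α + α^2) (α^2) (by positivity) (by nlinarith),
      intlog2 1 (α^2) (by positivity) (by nlinarith),
      intlog1 (1 - 2*α) (α * (1 - 2*α)) (by nlinarith) (by nlinarith),
      intlog1 (α - α^2) (α - α^2 - α * (1 - 2*α)) (by nlinarith) (by nlinarith),
      intlog2 (1 - 2*α^2) (α - α^2) (by nlinarith) (by nlinarith),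
      intlog1 (1 - 2*α - α * (1 - 2*α)) (α * (1 - 2*α)) (by nlinarith) (by nlinarith),
      intlog2 (1 - 2*α) (α * (1 - 2*α)) (by nlinarith) (by nlinarith)]
  rw [show (1:ℝ) - 2*α - α*(1-2*α) - α*(1-2*α) = (1-2*α)^2 by ring,
      show (1:ℝ) - 2*α - 2*(α*(1-2*α)) = (1-2*α)^2 by ring,
      show (1:ℝ) - 2*α^2 - 2*(α - α^2) = 1 - 2*α by ring,
      show (1:ℝ) - 2*α + α^2 - α^2 = 1 - 2*α by ring,
      show α - α^2 - (α - α^2 - α*(1-2*α)) = α*(1-2*α) by ring,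
      show α - α^2 - α*(1-2*α) = α^2 by ring,
      show (1:ℝ) - α - (α - α^2) = (1-α)^2 by ring,
      show (1:ℝ) - 2*α - α*(1-2*α) = (1-2*α)*(1-α) by ring,
      show α - α^2 = α*(1-α) by ring,
      show (1:ℝ) - 2*α + α^2 = (1-α)^2 by ring]
  simp only [Real.log_pow, Real.log_mul hαne hsne, Real.log_mul hαne h1ne,
      Real.log_mul hsne h1ne, Real.log_one]
  push_cast
  ring
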